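/- Let n ∈ ℕ, 0 < r_j < ∞, 1 ≤ p_j < ∞, 1 ≤ θ_j ≤ ∞ for j = 1,…,n; define r, p, θ and β_j as in the context and suppose β_j > 0 for every j. Let 0 < δ ≤ (1/2)·min_{1≤j≤n} {β_j r_j}. Let φ_j be positive, strictly increasing, continuously differentiable functions on (0,∞) with t^{−r_j}φ_j(t) ∈ 𝓛^{θ_j}, such that t ↦ φ_j(t)t^{−r_j+δ} increases and t ↦ φ_j(t)t^{−r_j−δ} decreases. Define σ(t) = inf { max_{1≤j≤n} t^{−1/p_j} φ_j(δ_j) : δ_j > 0, ∏_{j=1}^n δ_j = t }. Then there exist positive, continuously differentiable functions δ_j(t) on (0,∞) such that ∏_{j=1}^n δ_j(t) = t for all t > 0 and σ(t) = t^{−1/p_j} φ_j(δ_j(t)) for every t > 0 and every j = 1,…,n. -/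

import Mathlib

open MeasureTheory Set
open scoped ENNReal NNReal BigOperators

noncomputable section

/-- The measure `du/u` on `(0,∞)`. -/
def muLog : Measure ℝ :=
  (volume.restrict (Set.Ioi (0:ℝ))).withDensity fun u => ENNReal.ofReal u⁻¹

/-- The `𝓛^θ` norm of an `ℝ≥0∞`-valued function on `(0,∞)` (with respect to `du/u`),
for `θ ∈ [1,∞]`; for `θ = ∞` it is the essential supremum. -/
def calLE (θ : ℝ≥0∞) (g : ℝ → ℝ≥0∞) : ℝ≥0∞ :=
  if θ = ∞ then essSup g muLog
  else (∫⁻ t, g t ^ θ.toReal ∂muLog) ^ (1 / θ.toReal)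

/-- The `𝓛^θ` norm of a real-valued function on `(0,∞)`. -/
def calL (θ : ℝ≥0∞) (g : ℝ → ℝ) : ℝ≥0∞ :=
  calLE θ fun t => ENNReal.ofReal |g t|

/-- The distribution function `λ_f(y) = |{x : |f x| > y}|`. -/
def distFn {n : ℕ} (f : (Fin n → ℝ) → ℝ) (y : ℝ) : ℝ≥0∞ :=
  volume {x | y < |f x|}

/-- `f ∈ S₀(ℝⁿ)`: measurable with finite distribution function for all `y > 0`. -/
def MemS0 {n : ℕ} (f : (Fin n → ℝ) → ℝ) : Prop :=
  Measurable f ∧ ∀ y : ℝ, 0 < y → distFn f y < ∞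

/-- The non-increasing rearrangement `f*`. -/
def rearr {n : ℕ} (f : (Fin n → ℝ) → ℝ) (t : ℝ) : ℝ :=
  sInf {y : ℝ | 0 ≤ y ∧ distFn f y ≤ ENNReal.ofReal t}

/-- The real-valued `L^p(ℝⁿ)` norm. -/
def lpR {n : ℕ} (p : ℝ) (f : (Fin n → ℝ) → ℝ) : ℝ :=
  (eLpNorm f (ENNReal.ofReal p) volume).toReal

/-- The difference of degree `k` in direction `j` with step `h`:
`Δ_j^k(h) f (x) = ∑ (-1)^{k-i} C(k,i) f(x + i h e_j)`. -/
def diffOp {n : ℕ} (j : Fin n) (k : ℕ) (h : ℝ) (f : (Fin n → ℝ) → ℝ) :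
    (Fin n → ℝ) → ℝ :=
  fun x => ∑ i ∈ Finset.range (k + 1),
    (-1 : ℝ) ^ (k - i) * (k.choose i : ℝ) * f (x + ((i : ℝ) * h) • (Pi.single j 1 : Fin n → ℝ))

/-- The modulus of continuity `ω_j^k(f;δ)_p = sup_{0<h≤δ} ‖Δ_j^k(h) f‖_p`. -/
def modCont {n : ℕ} (j : Fin n) (k : ℕ) (p : ℝ) (f : (Fin n → ℝ) → ℝ) (δ : ℝ) : ℝ :=
  sSup ((fun h => lpR p (diffOp j k h f)) '' Set.Ioc 0 δ)

/-- The directional Besov seminorm `‖f‖_{b^r_{p,θ;j}}` with difference order `k`. -/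
def besov {n : ℕ} (j : Fin n) (k : ℕ) (r p : ℝ) (θ : ℝ≥0∞)
    (f : (Fin n → ℝ) → ℝ) : ℝ≥0∞ :=
  calL θ fun h => h ^ (-r) * lpR p (diffOp j k h f)

/-- The Lorentz quasinorm `‖f‖_{q,s} = ‖t^{1/q} f*(t)‖_{𝓛^s}`. -/
def lorentz {n : ℕ} (q : ℝ) (s : ℝ≥0∞) (f : (Fin n → ℝ) → ℝ) : ℝ≥0∞ :=
  calL s fun t => t ^ (1 / q) * rearr f t

/-- The norm in the sum space `L¹ + L^{p₀}`. -/
def sumNormE {n : ℕ} (p₀ : ℝ) (f : (Fin n → ℝ) → ℝ) : ℝ≥0∞ :=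
  ⨅ (g : (Fin n → ℝ) → ℝ) (h : (Fin n → ℝ) → ℝ) (_ : f = g + h),
    eLpNorm g 1 volume + eLpNorm h (ENNReal.ofReal p₀) volume


section AuxiliaryLemmas

open Filter Set
open scoped Topology

/-- If `g` has derivative `c` at `x > 0`, `g x > 0`, and `g` grows at least like
`(b/x)^K` to the right of `x` with `K > 0`, then `c > 0`. -/
lemma aux_deriv_pos {g : ℝ → ℝ} {x K c : ℝ} (hx : 0 < x) (hgx : 0 < g x) (hK : 0 < K)
    (hd : HasDerivAt g c x)
    (hgrow : ∀ b, x ≤ b → g x * x ^ (-K) * b ^ K ≤ g b) : 0 < c := by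
  set C := g x * x ^ (-K) with hC
  have hxK : (0:ℝ) < x ^ (-K) := Real.rpow_pos_of_pos hx _
  have hC0 : 0 < C := mul_pos hgx hxK
  have hCx : C * x ^ K = g x := by
    rw [hC, mul_assoc, ← Real.rpow_add hx, show -K + K = (0:ℝ) by ring, Real.rpow_zero, mul_one]
  have hχ : HasDerivAt (fun b : ℝ => C * b ^ K) (C * (K * x ^ (K - 1))) x :=
    (Real.hasDerivAt_rpow_const (Or.inl hx.ne')).const_mul C
  have hsub : Set.Ioi x ⊆ {y : ℝ | y ≠ x} := fun b hb => ne_of_gt hb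
  have hslope1 : Tendsto (slope g x) (𝓝[>] x) (𝓝 c) :=
    (hasDerivAt_iff_tendsto_slope.1 hd).mono_left (nhdsWithin_mono x hsub)
  have hslope2 : Tendsto (slope (fun b : ℝ => C * b ^ K) x) (𝓝[>] x)
      (𝓝 (C * (K * x ^ (K - 1)))) :=
    (hasDerivAt_iff_tendsto_slope.1 hχ).mono_left (nhdsWithin_mono x hsub)
  have hle : C * (K * x ^ (K - 1)) ≤ c := by
    refine le_of_tendsto_of_tendsto hslope2 hslope1 ?_
    refine eventually_mem_nhdsWithin.mono fun b hb => ?_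
    have hbx : x < b := hb
    rw [slope_def_field, slope_def_field]
    apply div_le_div_of_nonneg_right ?_ ?_
    · exact sub_le_sub (hgrow b hbx.le) (le_of_eq hCx.symm)
    · exact (sub_pos.2 hbx).le
  have hpos : 0 < C * (K * x ^ (K - 1)) :=
    mul_pos hC0 (mul_pos hK (Real.rpow_pos_of_pos hx _))
  exact lt_of_lt_of_le hpos hle

/-- A finite product of `C^1` functions is `C^1` at a point. -/
lemma aux_prod_contDiffAt {ι : Type*} {E : Type*} [NormedAddCommGroup E] [NormedSpace ℝ E]
    (u : Finset ι) (f : ι → E → ℝ) (x : E) (h : ∀ i ∈ u, ContDiffAt ℝ 1 (f i) x) :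
    ContDiffAt ℝ 1 (fun y => ∏ i ∈ u, f i y) x := by
  classical
  induction u using Finset.induction_on with
  | empty => simpa using contDiffAt_const (c := (1:ℝ))
  | insert a s ha ih =>
      simp only [Finset.prod_insert ha]
      exact (h a (Finset.mem_insert_self a s)).mul
        (ih fun i hi => h i (Finset.mem_insert_of_mem hi))

end AuxiliaryLemmas

/-- The function `σ(t) = inf { max_j t^{-1/p_j} φ_j(δ_j) : δ_j > 0, ∏ δ_j = t }`. -/
def sigmaFn {n : ℕ} (pp : Fin n → ℝ) (φ : Fin n → ℝ → ℝ) (t : ℝ) : ℝ :=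
  sInf {a : ℝ | ∃ d : Fin n → ℝ, (∀ j, 0 < d j) ∧ (∏ j, d j) = t ∧
    a = ⨆ j, t ^ (-(pp j)⁻¹) * φ j (d j)}

/-- Lemma 3(ii): existence of the `C¹` functions `δ_j(t)` equilibrating
the infimum defining `σ`. -/
theorem stmt3 (n : ℕ) (hn : 0 < n) (rr pp : Fin n → ℝ) (θθ : Fin n → ℝ≥0∞)
    (hrr : ∀ j, 0 < rr j) (hpp : ∀ j, 1 ≤ pp j) (hθθ : ∀ j, 1 ≤ θθ j)
    (r p : ℝ) (θ : ℝ≥0∞) (β : Fin n → ℝ)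
    (hrdef : r = (n : ℝ) / ∑ j, (rr j)⁻¹)
    (hpdef : p = ((n : ℝ) / r) / ∑ j, (pp j * rr j)⁻¹)
    (hθdef : θ = (ENNReal.ofReal ((r / n) * ∑ j, ((θθ j)⁻¹).toReal / rr j))⁻¹)
    (hβdef : ∀ j, β j = (rr j)⁻¹ * (r / n + (pp j)⁻¹ - p⁻¹))
    (hβ : ∀ j, 0 < β j)
    (δ : ℝ) (hδ : 0 < δ) (hδ' : δ ≤ (1 / 2) * ⨅ j, β j * rr j)
    (φ : Fin n → ℝ → ℝ)
    (hφpos : ∀ j t, 0 < t → 0 < φ j t)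
    (hφmono : ∀ j, StrictMonoOn (φ j) (Set.Ioi 0))
    (hφC1 : ∀ j, ContDiffOn ℝ 1 (φ j) (Set.Ioi 0))
    (hφint : ∀ j, calL (θθ j) (fun t => t ^ (-(rr j)) * φ j t) < ∞)
    (hφup : ∀ j, MonotoneOn (fun t => φ j t * t ^ (-(rr j) + δ)) (Set.Ioi 0))
    (hφdown : ∀ j, AntitoneOn (fun t => φ j t * t ^ (-(rr j) - δ)) (Set.Ioi 0)) :
    ∃ δfun : Fin n → ℝ → ℝ,
      (∀ j, ContDiffOn ℝ 1 (δfun j) (Set.Ioi 0)) ∧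
      (∀ j t, 0 < t → 0 < δfun j t) ∧
      (∀ t, 0 < t → (∏ j, δfun j t) = t) ∧
      (∀ j t, 0 < t → sigmaFn pp φ t = t ^ (-(pp j)⁻¹) * φ j (δfun j t)) := by
  classical
  haveI hne : Nonempty (Fin n) := ⟨⟨0, hn⟩⟩
  have hn0 : (0:ℝ) < n := by exact_mod_cast hn
  -- basic positivity
  have hSrr_pos : 0 < ∑ j, (rr j)⁻¹ :=
    Finset.sum_pos (fun j _ => inv_pos.2 (hrr j)) Finset.univ_nonempty
  have hr0 : 0 < r := by rw [hrdef]; exact div_pos hn0 hSrr_pos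
  have hrn : r / n = (∑ j, (rr j)⁻¹)⁻¹ := by
    rw [hrdef, div_div, mul_comm (∑ j, (rr j)⁻¹) (n:ℝ), ← div_div, div_self hn0.ne', one_div]
  have hrn_pos : 0 < r / (n:ℝ) := div_pos hr0 hn0
  have hrn_le : ∀ j, r / n ≤ rr j := by
    intro j
    rw [hrn]
    have h1 : (rr j)⁻¹ ≤ ∑ i, (rr i)⁻¹ :=
      Finset.single_le_sum (f := fun i => (rr i)⁻¹)
        (fun i _ => (inv_pos.2 (hrr i)).le) (Finset.mem_univ j)
    calc (∑ i, (rr i)⁻¹)⁻¹ ≤ ((rr j)⁻¹)⁻¹ := inv_anti₀ (inv_pos.2 (hrr j)) h1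
      _ = rr j := inv_inv _
  have hSrr : ∑ j, (rr j)⁻¹ = (n:ℝ) / r := by
    rw [hrdef]
    field_simp
  have hppos : ∀ j, 0 < pp j := fun j => lt_of_lt_of_le one_pos (hpp j)
  have hS2_pos : 0 < ∑ j, (pp j * rr j)⁻¹ :=
    Finset.sum_pos (fun j _ => inv_pos.2 (mul_pos (hppos j) (hrr j))) Finset.univ_nonempty
  have hpinv : p⁻¹ = (r / n) * ∑ j, (pp j * rr j)⁻¹ := by
    rw [hpdef]
    field_simp
  -- there is an index where `β j * rr j ≤ r/n`, hence `δ < rr j` for all `j`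
  obtain ⟨i0, -, hi0⟩ :=
    Finset.exists_min_image Finset.univ (fun j => (pp j)⁻¹) Finset.univ_nonempty
  have hkey : (pp i0)⁻¹ ≤ p⁻¹ := by
    rw [hpinv]
    have h1 : (pp i0)⁻¹ = (r / n) * ∑ j, (pp i0)⁻¹ * (rr j)⁻¹ := by
      rw [← Finset.mul_sum, hSrr]
      field_simp
    rw [h1]
    apply mul_le_mul_of_nonneg_left _ hrn_pos.le
    apply Finset.sum_le_sum
    intro j _
    rw [mul_inv]
    exact mul_le_mul_of_nonneg_right (hi0 j (Finset.mem_univ j)) (inv_pos.2 (hrr j)).le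
  have hmin_le : (⨅ j, β j * rr j) ≤ r / n := by
    have h2 : β i0 * rr i0 ≤ r / n := by
      rw [hβdef i0, mul_comm ((rr i0)⁻¹) _, mul_assoc, inv_mul_cancel₀ (hrr i0).ne', mul_one]
      linarith
    exact le_trans (ciInf_le (Finite.bddBelow_range _) i0) h2
  have hδr : ∀ j, δ < rr j := by
    intro j
    have h3 : δ ≤ (1/2) * (r/n) :=
      le_trans hδ' (mul_le_mul_of_nonneg_left hmin_le (by norm_num))
    have h4 := hrn_le j
    have h5 := hrr j
    linarith
  have hc : ∀ j, 0 < rr j - δ := fun j => sub_pos.2 (hδr j)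
  have hφ1 : ∀ j, 0 < φ j 1 := fun j => hφpos j 1 one_pos
  -- growth bound from `hφup`
  have hgrow : ∀ j x b, 0 < x → x ≤ b →
      φ j x * x ^ (-(rr j - δ)) * b ^ (rr j - δ) ≤ φ j b := by
    intro j x b hx hxb
    have hb : 0 < b := lt_of_lt_of_le hx hxb
    have h := hφup j (Set.mem_Ioi.2 hx) (Set.mem_Ioi.2 hb) hxb
    rw [show -(rr j) + δ = -(rr j - δ) by ring] at h
    calc φ j x * x ^ (-(rr j - δ)) * b ^ (rr j - δ)
        ≤ φ j b * b ^ (-(rr j - δ)) * b ^ (rr j - δ) :=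
          mul_le_mul_of_nonneg_right h (Real.rpow_nonneg hb.le _)
      _ = φ j b := by
          rw [mul_assoc, ← Real.rpow_add hb, show -(rr j - δ) + (rr j - δ) = (0:ℝ) by ring,
            Real.rpow_zero, mul_one]
  have hupper1 : ∀ j x, 0 < x → x ≤ 1 → φ j x ≤ φ j 1 * x ^ (rr j - δ) := by
    intro j x hx hx1
    have h := hgrow j x 1 hx hx1
    rw [Real.one_rpow, mul_one] at h
    have h2 := mul_le_mul_of_nonneg_right h (Real.rpow_nonneg hx.le (rr j - δ))
    rwa [mul_assoc, ← Real.rpow_add hx, show -(rr j - δ) + (rr j - δ) = (0:ℝ) by ring,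
      Real.rpow_zero, mul_one] at h2
  have hlower1 : ∀ j b, 1 ≤ b → φ j 1 * b ^ (rr j - δ) ≤ φ j b := by
    intro j b hb
    have h := hgrow j 1 b one_pos hb
    rwa [Real.one_rpow, mul_one] at h
  -- surjectivity of φ j onto (0, ∞)
  have hexist : ∀ j y, 0 < y → ∃ x, 0 < x ∧ φ j x = y := by
    intro j y hy
    have hcj : 0 < rr j - δ := hc j
    have hyA : 0 < y / (2 * φ j 1) := div_pos hy (by have := hφ1 j; linarith)
    set A := (y / (2 * φ j 1)) ^ (rr j - δ)⁻¹ with hAdef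
    have hApos : 0 < A := Real.rpow_pos_of_pos hyA _
    set a := min 1 A with hadef
    have ha : 0 < a := lt_min one_pos hApos
    have ha1 : a ≤ 1 := min_le_left _ _
    have hφa : φ j a < y := by
      have h1 : φ j a ≤ φ j 1 * a ^ (rr j - δ) := hupper1 j a ha ha1
      have h2 : a ^ (rr j - δ) ≤ y / (2 * φ j 1) := by
        have haA : a ≤ A := min_le_right _ _
        calc a ^ (rr j - δ) ≤ A ^ (rr j - δ) := Real.rpow_le_rpow ha.le haA hcj.le
          _ = y / (2 * φ j 1) := by
              rw [hAdef, ← Real.rpow_mul hyA.le, inv_mul_cancel₀ hcj.ne', Real.rpow_one]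
      have h3 : φ j 1 * a ^ (rr j - δ) ≤ φ j 1 * (y / (2 * φ j 1)) :=
        mul_le_mul_of_nonneg_left h2 (hφ1 j).le
      have h4 : φ j 1 * (y / (2 * φ j 1)) = y / 2 := by
        have h0 : φ j 1 ≠ 0 := (hφ1 j).ne'
        field_simp
      have := hφ1 j
      calc φ j a ≤ φ j 1 * (y / (2 * φ j 1)) := le_trans h1 h3
        _ = y / 2 := h4
        _ < y := by linarith
    have hyB : 0 ≤ 2 * y / φ j 1 := le_of_lt (div_pos (by linarith) (hφ1 j))
    set Bb := max (a + 1) (max 1 ((2 * y / φ j 1) ^ (rr j - δ)⁻¹)) with hBbdef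
    have hb1 : 1 ≤ Bb := le_trans (le_max_left 1 _) (le_max_right _ _)
    have hab : a < Bb := lt_of_lt_of_le (by linarith) (le_max_left _ _)
    have hφb : y < φ j Bb := by
      have h1 : φ j 1 * Bb ^ (rr j - δ) ≤ φ j Bb := hlower1 j Bb hb1
      have h3 : (2 * y / φ j 1) ^ (rr j - δ)⁻¹ ≤ Bb :=
        le_trans (le_max_right _ _) (le_max_right _ _)
      have h2 : 2 * y / φ j 1 ≤ Bb ^ (rr j - δ) := by
        calc 2 * y / φ j 1 = ((2 * y / φ j 1) ^ (rr j - δ)⁻¹) ^ (rr j - δ) := by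
              rw [← Real.rpow_mul hyB, inv_mul_cancel₀ hcj.ne', Real.rpow_one]
          _ ≤ Bb ^ (rr j - δ) := Real.rpow_le_rpow (Real.rpow_nonneg hyB _) h3 hcj.le
      have h5 : 2 * y ≤ Bb ^ (rr j - δ) * φ j 1 := (div_le_iff₀ (hφ1 j)).1 h2
      nlinarith [hφ1 j]
    have hcont : ContinuousOn (φ j) (Set.Icc a Bb) :=
      (hφC1 j).continuousOn.mono fun x hx => Set.mem_Ioi.2 (lt_of_lt_of_le ha hx.1)
    obtain ⟨x, hx, hxy⟩ := intermediate_value_Ioo hab.le hcont ⟨hφa, hφb⟩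
    exact ⟨x, lt_trans ha hx.1, hxy⟩
  -- the inverse functions ψ j
  have hchoice : ∀ (j : Fin n) (y : ℝ), ∃ x, 0 < y → 0 < x ∧ φ j x = y := by
    intro j y
    by_cases hy : 0 < y
    · obtain ⟨x, hx⟩ := hexist j y hy
      exact ⟨x, fun _ => hx⟩
    · exact ⟨1, fun h => absurd h hy⟩
  choose ψ hψ using hchoice
  have hψ_pos : ∀ j y, 0 < y → 0 < ψ j y := fun j y hy => (hψ j y hy).1
  have hφψ : ∀ j y, 0 < y → φ j (ψ j y) = y := fun j y hy => (hψ j y hy).2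
  have hψφ : ∀ j x, 0 < x → ψ j (φ j x) = x := by
    intro j x hx
    have hy : 0 < φ j x := hφpos j x hx
    exact (hφmono j).injOn (Set.mem_Ioi.2 (hψ_pos j _ hy)) (Set.mem_Ioi.2 hx) (hφψ j _ hy)
  have hψmono : ∀ j, StrictMonoOn (ψ j) (Set.Ioi 0) := by
    intro j y1 h1 y2 h2 h12
    by_contra hcon
    push_neg at hcon
    have := (hφmono j).monotoneOn (Set.mem_Ioi.2 (hψ_pos j y2 h2))
      (Set.mem_Ioi.2 (hψ_pos j y1 h1)) hcon
    rw [hφψ j y1 h1, hφψ j y2 h2] at this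
    exact absurd h12 (not_lt.2 this)
  -- differentiability of φ and positivity of its derivative
  have hφdiffAt : ∀ j x, 0 < x → ContDiffAt ℝ 1 (φ j) x := fun j x hx =>
    (hφC1 j).contDiffAt (Ioi_mem_nhds hx)
  have hφhd : ∀ j x, 0 < x → HasDerivAt (φ j) (deriv (φ j) x) x := fun j x hx =>
    ((hφdiffAt j x hx).differentiableAt one_ne_zero).hasDerivAt
  have hφd_pos : ∀ j x, 0 < x → 0 < deriv (φ j) x := fun j x hx =>
    aux_deriv_pos hx (hφpos j x hx) (hc j) (hφhd j x hx) (fun b hb => hgrow j x b hx hb)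
  -- smoothness of ψ
  have hψ_cd : ∀ j y, 0 < y → ContDiffAt ℝ 1 (ψ j) y := by
    intro j y hy
    have hx₀ : 0 < ψ j y := hψ_pos j y hy
    have hcd := hφdiffAt j (ψ j y) hx₀
    have hdne : deriv (φ j) (ψ j y) ≠ 0 := (hφd_pos j _ hx₀).ne'
    have hfe := (hφhd j (ψ j y) hx₀).hasFDerivAt_equiv hdne
    have hg : ∀ᶠ z in nhds (ψ j y), ψ j (φ j z) = z := by
      filter_upwards [Ioi_mem_nhds hx₀] with z hz using hψφ j z hz
    have huniq := (hcd.hasStrictFDerivAt' hfe one_ne_zero).localInverse_unique hg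
    have hloc := hcd.to_localInverse (f' := _) hfe one_ne_zero
    rw [hφψ j y hy] at huniq hloc
    exact hloc.congr_of_eventuallyEq huniq
  have hψhd : ∀ j y, 0 < y → HasDerivAt (ψ j) ((deriv (φ j) (ψ j y))⁻¹) y := by
    intro j y hy
    refine HasDerivAt.of_local_left_inverse ((hψ_cd j y hy).continuousAt)
      (hφhd j (ψ j y) (hψ_pos j y hy)) ((hφd_pos j _ (hψ_pos j y hy)).ne') ?_
    filter_upwards [Ioi_mem_nhds hy] with z hz using hφψ j z hz
  -- the product function P
  set Pfun : ℝ → ℝ → ℝ := fun t s => ∏ j, ψ j (s * t ^ (pp j)⁻¹) with hPfun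
  have harg : ∀ (t s : ℝ) (j : Fin n), 0 < t → 0 < s → 0 < s * t ^ (pp j)⁻¹ :=
    fun t s j ht hs => mul_pos hs (Real.rpow_pos_of_pos ht _)
  have hPpos : ∀ t s, 0 < t → 0 < s → 0 < Pfun t s := fun t s ht hs =>
    Finset.prod_pos fun j _ => hψ_pos j _ (harg t s j ht hs)
  have hPmono : ∀ t, 0 < t → StrictMonoOn (Pfun t) (Set.Ioi 0) := by
    intro t ht s1 hs1 s2 hs2 h12
    refine Finset.prod_lt_prod_of_nonempty (fun j _ => hψ_pos j _ (harg t s1 j ht hs1))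
      (fun j _ => hψmono j (Set.mem_Ioi.2 (harg t s1 j ht hs1))
        (Set.mem_Ioi.2 (harg t s2 j ht hs2))
        (mul_lt_mul_of_pos_right h12 (Real.rpow_pos_of_pos ht _))) Finset.univ_nonempty
  -- existence of the equilibrating value s
  have hProot : ∀ t, 0 < t → ∃ s, 0 < s ∧ Pfun t s = t := by
    intro t ht
    set m := t ^ (n:ℝ)⁻¹ with hm
    have hmpos : 0 < m := Real.rpow_pos_of_pos ht _
    have hmn : (∏ _j : Fin n, m) = t := by
      rw [Finset.prod_const, Finset.card_univ, Fintype.card_fin,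
        ← Real.rpow_natCast m n, hm, ← Real.rpow_mul ht.le,
        inv_mul_cancel₀ (show (n:ℝ) ≠ 0 from hn0.ne'), Real.rpow_one]
    set q : Fin n → ℝ := fun j => φ j m * t ^ (-(pp j)⁻¹) with hq
    have hqpos : ∀ j, 0 < q j := fun j =>
      mul_pos (hφpos j m hmpos) (Real.rpow_pos_of_pos ht _)
    have hqmul : ∀ j, q j * t ^ (pp j)⁻¹ = φ j m := by
      intro j
      rw [hq]
      rw [mul_assoc, ← Real.rpow_add ht, show -(pp j)⁻¹ + (pp j)⁻¹ = (0:ℝ) by ring,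
        Real.rpow_zero, mul_one]
    set s₀ := (Finset.univ.inf' Finset.univ_nonempty q) / 2 with hs₀
    set s₁ := 2 * Finset.univ.sup' Finset.univ_nonempty q with hs₁
    have hinfpos : 0 < Finset.univ.inf' Finset.univ_nonempty q :=
      (Finset.lt_inf'_iff _).2 fun j _ => hqpos j
    have hs₀pos : 0 < s₀ := by rw [hs₀]; linarith
    have hs₀le : ∀ j, s₀ ≤ q j := fun j => by
      have := Finset.inf'_le q (Finset.mem_univ j)
      rw [hs₀]; linarith [hqpos j]
    have hs₁ge : ∀ j, q j ≤ s₁ := fun j => by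
      have h1 := Finset.le_sup' q (Finset.mem_univ j)
      have h2 : 0 < Finset.univ.sup' Finset.univ_nonempty q :=
        lt_of_lt_of_le (hqpos j) h1
      rw [hs₁]; linarith
    have hs₀s₁ : s₀ ≤ s₁ := le_trans (hs₀le ⟨0, hn⟩) (hs₁ge ⟨0, hn⟩)
    have hP₀ : Pfun t s₀ ≤ t := by
      have hstep : Pfun t s₀ ≤ ∏ _j : Fin n, m := by
        apply Finset.prod_le_prod
        · intro j _; exact (hψ_pos j _ (harg t s₀ j ht hs₀pos)).le
        · intro j _
          have h1 : s₀ * t ^ (pp j)⁻¹ ≤ φ j m := by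
            rw [← hqmul j]
            exact mul_le_mul_of_nonneg_right (hs₀le j) (Real.rpow_pos_of_pos ht _).le
          have h2 := (hψmono j).monotoneOn (Set.mem_Ioi.2 (harg t s₀ j ht hs₀pos))
            (Set.mem_Ioi.2 (hφpos j m hmpos)) h1
          rwa [hψφ j m hmpos] at h2
      rwa [hmn] at hstep
    have hP₁ : t ≤ Pfun t s₁ := by
      have hs₁pos : 0 < s₁ := lt_of_lt_of_le hs₀pos hs₀s₁
      have hstep : (∏ _j : Fin n, m) ≤ Pfun t s₁ := by
        apply Finset.prod_le_prod
        · intro j _; exact hmpos.le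
        · intro j _
          have h1 : φ j m ≤ s₁ * t ^ (pp j)⁻¹ := by
            rw [← hqmul j]
            exact mul_le_mul_of_nonneg_right (hs₁ge j) (Real.rpow_pos_of_pos ht _).le
          have h2 := (hψmono j).monotoneOn (Set.mem_Ioi.2 (hφpos j m hmpos))
            (Set.mem_Ioi.2 (harg t s₁ j ht hs₁pos)) h1
          rwa [hψφ j m hmpos] at h2
      rwa [hmn] at hstep
    have hcont : ContinuousOn (fun s => Pfun t s) (Set.Icc s₀ s₁) := by
      intro s hs
      have hs0 : 0 < s := lt_of_lt_of_le hs₀pos hs.1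
      have : ContDiffAt ℝ 1 (fun s => Pfun t s) s :=
        aux_prod_contDiffAt Finset.univ (fun j s => ψ j (s * t ^ (pp j)⁻¹)) s
          (fun j _ => (hψ_cd j _ (harg t s j ht hs0)).comp s
            (contDiffAt_id.mul contDiffAt_const))
      exact this.continuousAt.continuousWithinAt
    obtain ⟨s, hsIcc, hseq⟩ := intermediate_value_Icc hs₀s₁ hcont ⟨hP₀, hP₁⟩
    exact ⟨s, lt_of_lt_of_le hs₀pos hsIcc.1, hseq⟩
  have hPchoice : ∀ t : ℝ, ∃ s, 0 < t → 0 < s ∧ Pfun t s = t := by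
    intro t
    by_cases ht : 0 < t
    · obtain ⟨s, hs⟩ := hProot t ht
      exact ⟨s, fun _ => hs⟩
    · exact ⟨1, fun h => absurd h ht⟩
  choose sfun hsfun using hPchoice
  have hs_pos : ∀ t, 0 < t → 0 < sfun t := fun t ht => (hsfun t ht).1
  have hPs : ∀ t, 0 < t → Pfun t (sfun t) = t := fun t ht => (hsfun t ht).2
  -- continuity of sfun
  have hPcont_t : ∀ b t₀, 0 < b → 0 < t₀ → ContinuousAt (fun t => Pfun t b) t₀ := by
    intro b t₀ hb ht₀
    have : ContDiffAt ℝ 1 (fun t => Pfun t b) t₀ :=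
      aux_prod_contDiffAt Finset.univ (fun j t => ψ j (b * t ^ (pp j)⁻¹)) t₀
        (fun j _ => (hψ_cd j _ (by
            exact mul_pos hb (Real.rpow_pos_of_pos ht₀ _))).comp t₀
          (contDiffAt_const.mul (Real.contDiffAt_rpow_const_of_ne (ne_of_gt ht₀))))
    exact this.continuousAt
  have hs_cont : ∀ t₀, 0 < t₀ → ContinuousAt sfun t₀ := by
    intro t₀ ht₀
    have hs₀ : 0 < sfun t₀ := hs_pos t₀ ht₀
    have : Filter.Tendsto sfun (nhds t₀) (nhds (sfun t₀)) := by
      refine tendsto_order.2 ⟨?_, ?_⟩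
      · intro b hb
        rcases le_or_gt b 0 with hb0 | hb0
        · filter_upwards [Ioi_mem_nhds ht₀] with t ht using lt_of_le_of_lt hb0 (hs_pos t ht)
        · have hPb : Pfun t₀ b < t₀ := by
            have := hPmono t₀ ht₀ (Set.mem_Ioi.2 hb0) (Set.mem_Ioi.2 hs₀) hb
            rwa [hPs t₀ ht₀] at this
          have hcont2 : ContinuousAt (fun t => t - Pfun t b) t₀ :=
            continuousAt_id.sub (hPcont_t b t₀ hb0 ht₀)
          have hev := hcont2.eventually (eventually_gt_nhds (sub_pos.2 hPb))
          filter_upwards [hev, Ioi_mem_nhds ht₀] with t h1 h2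
          by_contra hle
          push_neg at hle
          have h3 : Pfun t (sfun t) ≤ Pfun t b :=
            ((hPmono t h2).monotoneOn) (Set.mem_Ioi.2 (hs_pos t h2)) (Set.mem_Ioi.2 hb0) hle
          rw [hPs t h2] at h3
          linarith
      · intro b hb
        have hb0 : 0 < b := lt_trans hs₀ hb
        have hPb : t₀ < Pfun t₀ b := by
          have := hPmono t₀ ht₀ (Set.mem_Ioi.2 hs₀) (Set.mem_Ioi.2 hb0) hb
          rwa [hPs t₀ ht₀] at this
        have hcont2 : ContinuousAt (fun t => Pfun t b - t) t₀ :=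
          (hPcont_t b t₀ hb0 ht₀).sub continuousAt_id
        have hev := hcont2.eventually (eventually_gt_nhds (sub_pos.2 hPb))
        filter_upwards [hev, Ioi_mem_nhds ht₀] with t h1 h2
        by_contra hle
        push_neg at hle
        have h3 : Pfun t b ≤ Pfun t (sfun t) :=
          ((hPmono t h2).monotoneOn) (Set.mem_Ioi.2 hb0) (Set.mem_Ioi.2 (hs_pos t h2)) hle
        rw [hPs t h2] at h3
        linarith
    exact this
  -- smoothness of sfun, via the inverse function theorem
  have hs_cd : ∀ t₀, 0 < t₀ → ContDiffAt ℝ 1 sfun t₀ := by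
    intro t₀ ht₀
    have hs₀ : 0 < sfun t₀ := hs_pos t₀ ht₀
    have hargp : ∀ j : Fin n, 0 < sfun t₀ * t₀ ^ (pp j)⁻¹ := fun j => harg t₀ _ j ht₀ hs₀
    set Q : ℝ × ℝ → ℝ := fun pr => ∏ j, ψ j (pr.2 * pr.1 ^ (pp j)⁻¹) with hQdef
    have hQcd : ContDiffAt ℝ 1 Q (t₀, sfun t₀) := by
      apply aux_prod_contDiffAt Finset.univ
        (fun j (pr : ℝ × ℝ) => ψ j (pr.2 * pr.1 ^ (pp j)⁻¹)) (t₀, sfun t₀)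
      intro j _
      have hinner : ContDiffAt ℝ 1 (fun pr : ℝ × ℝ => pr.2 * pr.1 ^ (pp j)⁻¹) (t₀, sfun t₀) :=
        contDiffAt_snd.mul
          ((Real.contDiffAt_rpow_const_of_ne (ne_of_gt ht₀)).comp (t₀, sfun t₀) contDiffAt_fst)
      exact (hψ_cd j _ (hargp j)).comp (t₀, sfun t₀) hinner
    have hfdQ : HasFDerivAt Q (fderiv ℝ Q (t₀, sfun t₀)) (t₀, sfun t₀) :=
      (hQcd.differentiableAt one_ne_zero).hasFDerivAt
    set LQ := fderiv ℝ Q (t₀, sfun t₀) with hLQdef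
    set A := LQ (1, 0) with hAdef
    set B := LQ (0, 1) with hBdef
    have hcomp : HasDerivAt (fun s => Q (t₀, s)) (LQ (0, 1)) (sfun t₀) := by
      have h1 : HasDerivAt (fun s : ℝ => ((t₀, s) : ℝ × ℝ)) ((0:ℝ), (1:ℝ)) (sfun t₀) :=
        (hasDerivAt_const (sfun t₀) t₀).prodMk (hasDerivAt_id (sfun t₀))
      exact hfdQ.comp_hasDerivAt (sfun t₀) h1
    have hD : HasDerivAt (fun s => Q (t₀, s))
        (∑ j, (∏ i ∈ Finset.univ.erase j, ψ i (sfun t₀ * t₀ ^ (pp i)⁻¹)) •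
          ((deriv (φ j) (ψ j (sfun t₀ * t₀ ^ (pp j)⁻¹)))⁻¹ * t₀ ^ (pp j)⁻¹)) (sfun t₀) := by
      have h0 : ∀ j ∈ Finset.univ, HasDerivAt (fun s : ℝ => ψ j (s * t₀ ^ (pp j)⁻¹))
          ((deriv (φ j) (ψ j (sfun t₀ * t₀ ^ (pp j)⁻¹)))⁻¹ * t₀ ^ (pp j)⁻¹) (sfun t₀) := by
        intro j _
        have hinner : HasDerivAt (fun s : ℝ => s * t₀ ^ (pp j)⁻¹) (t₀ ^ (pp j)⁻¹) (sfun t₀) :=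
          hasDerivAt_mul_const _
        exact (hψhd j _ (hargp j)).comp (sfun t₀) hinner
      have h := HasDerivAt.finset_prod h0
      rw [Finset.prod_fn] at h
      exact h
    have hBpos : 0 < B := by
      rw [hBdef, hcomp.unique hD]
      apply Finset.sum_pos _ Finset.univ_nonempty
      intro j _
      apply mul_pos
      · exact Finset.prod_pos fun i _ => hψ_pos i _ (hargp i)
      · exact mul_pos (inv_pos.2 (hφd_pos j _ (hψ_pos j _ (hargp j)))) (Real.rpow_pos_of_pos ht₀ _)
    have hLQapp : ∀ v : ℝ × ℝ, LQ v = v.1 * A + v.2 * B := by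
      intro v
      have hv : v = v.1 • ((1:ℝ), (0:ℝ)) + v.2 • ((0:ℝ), (1:ℝ)) := by
        apply Prod.ext <;> simp
      calc LQ v = LQ (v.1 • ((1:ℝ), (0:ℝ)) + v.2 • ((0:ℝ), (1:ℝ))) := by rw [← hv]
        _ = v.1 * A + v.2 * B := by
            rw [map_add, ContinuousLinearMap.map_smul, ContinuousLinearMap.map_smul,
              smul_eq_mul, smul_eq_mul, ← hAdef, ← hBdef]
    have hBne : B ≠ 0 := hBpos.ne'
    set Efun : (ℝ × ℝ) ≃ₗ[ℝ] (ℝ × ℝ) :=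
      { toFun := fun v => (v.1, LQ v)
        map_add' := by intro x y; simp [Prod.ext_iff]
        map_smul' := by intro cc x; simp [Prod.ext_iff]
        invFun := fun w => (w.1, B⁻¹ * (w.2 - A * w.1))
        left_inv := by
          intro v
          apply Prod.ext
          · rfl
          · show B⁻¹ * (LQ v - A * v.1) = v.2
            rw [hLQapp v]
            field_simp
            ring
        right_inv := by
          intro w
          apply Prod.ext
          · rfl
          · show LQ (w.1, B⁻¹ * (w.2 - A * w.1)) = w.2
            rw [hLQapp (w.1, B⁻¹ * (w.2 - A * w.1))]
            field_simp
            ring } with hEfun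
    set e := Efun.toContinuousLinearEquiv with hedef
    have hHfd : HasFDerivAt (fun pr : ℝ × ℝ => ((pr.1, Q pr) : ℝ × ℝ))
        (↑e : (ℝ × ℝ) →L[ℝ] (ℝ × ℝ)) (t₀, sfun t₀) := by
      have hH1 : HasFDerivAt (fun pr : ℝ × ℝ => ((pr.1, Q pr) : ℝ × ℝ))
          ((ContinuousLinearMap.fst ℝ ℝ ℝ).prod LQ) (t₀, sfun t₀) :=
        (hasFDerivAt_fst).prodMk hfdQ
      have hco : (↑e : (ℝ × ℝ) →L[ℝ] (ℝ × ℝ)) = (ContinuousLinearMap.fst ℝ ℝ ℝ).prod LQ := by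
        apply ContinuousLinearMap.ext
        intro v
        show e v = _
        simp [hedef, hEfun, ContinuousLinearMap.prod_apply]
      rw [hco]
      exact hH1
    have hHcd : ContDiffAt ℝ 1 (fun pr : ℝ × ℝ => ((pr.1, Q pr) : ℝ × ℝ)) (t₀, sfun t₀) :=
      contDiffAt_fst.prodMk hQcd
    have hinvcd : ContDiffAt ℝ 1 (hHcd.localInverse hHfd one_ne_zero)
        ((fun pr : ℝ × ℝ => ((pr.1, Q pr) : ℝ × ℝ)) (t₀, sfun t₀)) :=
      hHcd.to_localInverse hHfd one_ne_zero
    have hHp₀ : ((fun pr : ℝ × ℝ => ((pr.1, Q pr) : ℝ × ℝ)) (t₀, sfun t₀)) = (t₀, t₀) := by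
      apply Prod.ext
      · rfl
      · show Q (t₀, sfun t₀) = t₀
        exact hPs t₀ ht₀
    have hleft : ∀ᶠ pr in nhds (t₀, sfun t₀),
        hHcd.localInverse hHfd one_ne_zero ((fun pr : ℝ × ℝ => ((pr.1, Q pr) : ℝ × ℝ)) pr) = pr :=
      (hHcd.hasStrictFDerivAt' hHfd one_ne_zero).eventually_left_inverse
    have htend : Filter.Tendsto (fun t => ((t, sfun t) : ℝ × ℝ)) (nhds t₀)
        (nhds ((t₀, sfun t₀) : ℝ × ℝ)) :=
      (continuousAt_id.prodMk (hs_cont t₀ ht₀))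
    have hev : ∀ᶠ t in nhds t₀, sfun t = (hHcd.localInverse hHfd one_ne_zero (t, t)).2 := by
      filter_upwards [htend.eventually hleft, Ioi_mem_nhds ht₀] with t h1 h2
      have hH : ((fun pr : ℝ × ℝ => ((pr.1, Q pr) : ℝ × ℝ)) ((t, sfun t) : ℝ × ℝ)) = (t, t) := by
        apply Prod.ext
        · rfl
        · show Q (t, sfun t) = t
          exact hPs t h2
      have h1' : hHcd.localInverse hHfd one_ne_zero (t, t) = (t, sfun t) := by
        rw [← hH]
        exact h1
      exact (congrArg Prod.snd h1').symm
    have hcd2 : ContDiffAt ℝ 1 (fun t => (hHcd.localInverse hHfd one_ne_zero (t, t)).2) t₀ := by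
      have hdiag : ContDiffAt ℝ 1 (fun t : ℝ => ((t, t) : ℝ × ℝ)) t₀ :=
        contDiffAt_id.prodMk contDiffAt_id
      have hinvcd' : ContDiffAt ℝ 1 (hHcd.localInverse hHfd one_ne_zero) ((t₀, t₀) : ℝ × ℝ) := by
        rwa [hHp₀] at hinvcd
      have hstep1 : ContDiffAt ℝ 1 ((hHcd.localInverse hHfd one_ne_zero) ∘
          (fun t : ℝ => ((t, t) : ℝ × ℝ))) t₀ := ContDiffAt.comp t₀ hinvcd' hdiag
      exact ContDiffAt.comp t₀ contDiffAt_snd hstep1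
    exact hcd2.congr_of_eventuallyEq hev
  -- assemble the answer
  refine ⟨fun j t => ψ j (sfun t * t ^ (pp j)⁻¹), ?_, ?_, ?_, ?_⟩
  · intro j t ht
    exact ((hψ_cd j _ (harg t _ j ht (hs_pos t ht))).comp t
      ((hs_cd t ht).mul (Real.contDiffAt_rpow_const_of_ne (ne_of_gt ht)))).contDiffWithinAt
  · intro j t ht
    exact hψ_pos j _ (harg t _ j ht (hs_pos t ht))
  · intro t ht
    have h := hPs t ht
    simp only [hPfun] at h
    exact h
  · intro j t ht
    have htp : ∀ i : Fin n, (0:ℝ) < t ^ (pp i)⁻¹ := fun i => Real.rpow_pos_of_pos ht _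
    have hargpos : ∀ i : Fin n, 0 < sfun t * t ^ (pp i)⁻¹ := fun i => harg t _ i ht (hs_pos t ht)
    have hPs' : (∏ i, ψ i (sfun t * t ^ (pp i)⁻¹)) = t := by
      have h := hPs t ht
      simp only [hPfun] at h
      exact h
    have hval : ∀ i : Fin n,
        t ^ (-(pp i)⁻¹) * φ i (ψ i (sfun t * t ^ (pp i)⁻¹)) = sfun t := by
      intro i
      rw [hφψ i _ (hargpos i), Real.rpow_neg ht.le, mul_comm (sfun t) _, ← mul_assoc,
        inv_mul_cancel₀ (htp i).ne', one_mul]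
    have hσ : sigmaFn pp φ t = sfun t := by
      unfold sigmaFn
      have hmem : sfun t ∈ {a : ℝ | ∃ d : Fin n → ℝ, (∀ i, 0 < d i) ∧ (∏ i, d i) = t ∧
          a = ⨆ i, t ^ (-(pp i)⁻¹) * φ i (d i)} := by
        refine ⟨fun i => ψ i (sfun t * t ^ (pp i)⁻¹), fun i => hψ_pos i _ (hargpos i),
          hPs', ?_⟩
        have h1 : (⨆ i, t ^ (-(pp i)⁻¹) * φ i (ψ i (sfun t * t ^ (pp i)⁻¹))) = sfun t := by
          simp only [hval]
          exact ciSup_const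
        exact h1.symm
      have hlb : ∀ x ∈ {a : ℝ | ∃ d : Fin n → ℝ, (∀ i, 0 < d i) ∧ (∏ i, d i) = t ∧
          a = ⨆ i, t ^ (-(pp i)⁻¹) * φ i (d i)}, sfun t ≤ x := by
        rintro x ⟨d, hd, hdprod, rfl⟩
        by_contra hlt
        push_neg at hlt
        have hterm : ∀ i, t ^ (-(pp i)⁻¹) * φ i (d i) < sfun t := fun i =>
          lt_of_le_of_lt (le_ciSup (f := fun i => t ^ (-(pp i)⁻¹) * φ i (d i)) (Finite.bddAbove_range _) i) hlt
        have hdlt : ∀ i, d i < ψ i (sfun t * t ^ (pp i)⁻¹) := by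
          intro i
          have h2 := hterm i
          rw [Real.rpow_neg ht.le] at h2
          have h1 : φ i (d i) < sfun t * t ^ (pp i)⁻¹ := by
            have h3 := mul_lt_mul_of_pos_left h2 (htp i)
            rw [← mul_assoc, mul_inv_cancel₀ (htp i).ne', one_mul] at h3
            linarith [h3]
          have h4 : d i = ψ i (φ i (d i)) := (hψφ i (d i) (hd i)).symm
          rw [h4]
          exact hψmono i (Set.mem_Ioi.2 (hφpos i _ (hd i))) (Set.mem_Ioi.2 (hargpos i)) h1
        have h5 : (∏ i, d i) < ∏ i, ψ i (sfun t * t ^ (pp i)⁻¹) :=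
          Finset.prod_lt_prod_of_nonempty (fun i _ => hd i) (fun i _ => hdlt i)
            Finset.univ_nonempty
        rw [hdprod, hPs'] at h5
        exact lt_irrefl t h5
      exact le_antisymm (csInf_le ⟨sfun t, fun x hx => hlb x hx⟩ hmem)
        (le_csInf ⟨_, hmem⟩ hlb)
    rw [hσ]
    exact (hval j).symm


end
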